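/- Under the meta-learning data generating assumptions, for all M, T ≥ 1, every m ∈ {1,…,M}, all ε, ε' ≥ 0, every random variable ψ̃ (finitely valued) with I[H_{M,T} ; ψ̃ | ψ] = 0 and I[H_{M,T} ; ψ | ψ̃] ≤ ε·MT, and every random variable θ̃ (finitely valued) with I[(H_{M,T}, ψ) ; θ̃ | θ_m] = 0 and I[D_m ; θ_m | (θ̃, ψ)] ≤ ε'·T, the total estimation error satisfies I[H_{M,T} ; ψ]/(MT) + I[D_m ; θ_m | ψ]/T ≤ I[ψ ; ψ̃]/(MT) + ε + I[θ_m ; θ̃ | ψ]/T + ε'. (Paper: upper bound of Theorem 'rate-distortion estimation error bound' for meta-learning, with the infima over compressions unfolded into a universally quantified statement.) -/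

import Mathlib

open MeasureTheory ProbabilityTheory Real

variable {Ω : Type*} [MeasureSpace Ω]

noncomputable def prob {𝒳 : Type*} (X : Ω → 𝒳) (x : 𝒳) : ℝ :=
  (ℙ (X ⁻¹' {x})).toReal

noncomputable def entropy {𝒳 : Type*} [Fintype 𝒳] (X : Ω → 𝒳) : ℝ :=
  -∑ x, prob X x * Real.log (prob X x)

noncomputable def condEntropy {𝒳 𝒴 : Type*} [Fintype 𝒳] [Fintype 𝒴]
    (X : Ω → 𝒳) (Y : Ω → 𝒴) : ℝ :=
  entropy (fun ω => (X ω, Y ω)) - entropy Y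

noncomputable def mutualInfo {𝒳 𝒴 : Type*} [Fintype 𝒳] [Fintype 𝒴]
    (X : Ω → 𝒳) (Y : Ω → 𝒴) : ℝ :=
  entropy X + entropy Y - entropy (fun ω => (X ω, Y ω))

noncomputable def condMutualInfo {𝒳 𝒴 𝒵 : Type*} [Fintype 𝒳] [Fintype 𝒴] [Fintype 𝒵]
    (X : Ω → 𝒳) (Y : Ω → 𝒴) (Z : Ω → 𝒵) : ℝ :=
  entropy (fun ω => (X ω, Z ω)) + entropy (fun ω => (Y ω, Z ω))
    - entropy (fun ω => (X ω, Y ω, Z ω)) - entropy Z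

def hist {𝒳 : Type*} {T : ℕ} (X : Fin T → Ω → 𝒳) (t : ℕ) (ht : t ≤ T) : Ω → (Fin t → 𝒳) :=
  fun ω i => X (Fin.castLE ht i) ω


private lemma pull {ι : Type*} (s : Finset ι) (f : ι → ℝ) (L : ℝ) :
    ∑ i ∈ s, -(f i * L) = -((∑ i ∈ s, f i) * L) := by
  rw [Finset.sum_mul]
  exact Finset.sum_neg_distrib (fun i => f i * L)

lemma key_ineq {α β γ : Type*} [Fintype α] [Fintype β] [Fintype γ]
    (q : α → β → γ → ℝ) (h0 : ∀ a b c, 0 ≤ q a b c)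
    (h1 : ∑ a, ∑ b, ∑ c, q a b c = 1) :
    0 ≤ (∑ a, ∑ c, -((∑ b, q a b c) * Real.log (∑ b, q a b c)))
      + (∑ b, ∑ c, -((∑ a, q a b c) * Real.log (∑ a, q a b c)))
      - (∑ a, ∑ b, ∑ c, -(q a b c * Real.log (q a b c)))
      - (∑ c, -((∑ a, ∑ b, q a b c) * Real.log (∑ a, ∑ b, q a b c))) := by
  classical
  set pXZ : α → γ → ℝ := fun a c => ∑ b, q a b c with hpXZ
  set pYZ : β → γ → ℝ := fun b c => ∑ a, q a b c with hpYZ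
  set pZ : γ → ℝ := fun c => ∑ a, ∑ b, q a b c with hpZ
  have hpXZ0 : ∀ a c, 0 ≤ pXZ a c := fun a c => Finset.sum_nonneg fun b _ => h0 a b c
  have hpYZ0 : ∀ b c, 0 ≤ pYZ b c := fun b c => Finset.sum_nonneg fun a _ => h0 a b c
  have hpZ0 : ∀ c, 0 ≤ pZ c := fun c =>
    Finset.sum_nonneg fun a _ => Finset.sum_nonneg fun b _ => h0 a b c
  have hqXZ : ∀ a b c, q a b c ≤ pXZ a c := fun a b c =>
    Finset.single_le_sum (fun b _ => h0 a b c) (Finset.mem_univ b)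
  have hqYZ : ∀ a b c, q a b c ≤ pYZ b c := fun a b c =>
    Finset.single_le_sum (fun a _ => h0 a b c) (Finset.mem_univ a)
  have hqZ : ∀ a b c, q a b c ≤ pZ c := fun a b c =>
    le_trans (hqXZ a b c) (Finset.single_le_sum (fun a _ => hpXZ0 a c) (Finset.mem_univ a))
  have E1 : (∑ a, ∑ b, ∑ c, -(q a b c * Real.log (pXZ a c)))
      = ∑ a, ∑ c, -(pXZ a c * Real.log (pXZ a c)) := by
    refine Finset.sum_congr rfl fun a _ => ?_
    rw [Finset.sum_comm]
    exact Finset.sum_congr rfl fun c _ => pull _ _ _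
  have E2 : (∑ a, ∑ b, ∑ c, -(q a b c * Real.log (pYZ b c)))
      = ∑ b, ∑ c, -(pYZ b c * Real.log (pYZ b c)) := by
    rw [Finset.sum_comm]
    refine Finset.sum_congr rfl fun b _ => ?_
    rw [Finset.sum_comm]
    exact Finset.sum_congr rfl fun c _ => pull _ _ _
  have E3 : (∑ a, ∑ b, ∑ c, -(q a b c * Real.log (pZ c)))
      = ∑ c, -(pZ c * Real.log (pZ c)) := by
    have swap1 : ∀ a : α, ∑ b, ∑ c, -(q a b c * Real.log (pZ c))
        = ∑ c, ∑ b, -(q a b c * Real.log (pZ c)) := fun a => Finset.sum_comm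
    simp only [swap1]
    rw [Finset.sum_comm]
    refine Finset.sum_congr rfl fun c _ => ?_
    exact (Finset.sum_congr rfl fun a _ => pull _ _ _).trans (pull _ _ _)
  rw [← E1, ← E2, ← E3]
  have key : ∀ a b c,
      q a b c - (if q a b c = 0 then 0 else pXZ a c * pYZ b c / pZ c)
      ≤ -(q a b c * Real.log (pXZ a c)) + -(q a b c * Real.log (pYZ b c))
        - -(q a b c * Real.log (q a b c)) - -(q a b c * Real.log (pZ c)) := by
    intro a b c
    by_cases hq : q a b c = 0
    · simp [hq]
    · have hq' : 0 < q a b c := lt_of_le_of_ne (h0 a b c) (Ne.symm hq)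
      have hXZ' : 0 < pXZ a c := lt_of_lt_of_le hq' (hqXZ a b c)
      have hYZ' : 0 < pYZ b c := lt_of_lt_of_le hq' (hqYZ a b c)
      have hZ' : 0 < pZ c := lt_of_lt_of_le hq' (hqZ a b c)
      rw [if_neg hq]
      have hlog : Real.log (pXZ a c * pYZ b c / (q a b c * pZ c))
          ≤ pXZ a c * pYZ b c / (q a b c * pZ c) - 1 :=
        Real.log_le_sub_one_of_pos (by positivity)
      have hexp : Real.log (pXZ a c * pYZ b c / (q a b c * pZ c))
          = Real.log (pXZ a c) + Real.log (pYZ b c)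
            - (Real.log (q a b c) + Real.log (pZ c)) := by
        rw [Real.log_div (by positivity) (by positivity),
          Real.log_mul (ne_of_gt hXZ') (ne_of_gt hYZ'),
          Real.log_mul (ne_of_gt hq') (ne_of_gt hZ')]
      have h2 : q a b c * Real.log (pXZ a c * pYZ b c / (q a b c * pZ c))
          ≤ q a b c * (pXZ a c * pYZ b c / (q a b c * pZ c) - 1) :=
        mul_le_mul_of_nonneg_left hlog (le_of_lt hq')
      have h3 : q a b c * (pXZ a c * pYZ b c / (q a b c * pZ c) - 1)
          = pXZ a c * pYZ b c / pZ c - q a b c := by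
        field_simp
      rw [hexp, h3] at h2
      nlinarith [h2]
  have hsum : ∑ a, ∑ b, ∑ c,
        (q a b c - (if q a b c = 0 then 0 else pXZ a c * pYZ b c / pZ c))
      ≤ ∑ a, ∑ b, ∑ c,
        (-(q a b c * Real.log (pXZ a c)) + -(q a b c * Real.log (pYZ b c))
          - -(q a b c * Real.log (q a b c)) - -(q a b c * Real.log (pZ c))) :=
    Finset.sum_le_sum fun a _ => Finset.sum_le_sum fun b _ => Finset.sum_le_sum
      fun c _ => key a b c
  have hB : ∑ a, ∑ b, ∑ c, (if q a b c = 0 then 0 else pXZ a c * pYZ b c / pZ c) ≤ 1 := by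
    have step1 : ∑ a, ∑ b, ∑ c, (if q a b c = 0 then 0 else pXZ a c * pYZ b c / pZ c)
        ≤ ∑ a, ∑ b, ∑ c, (if pZ c = 0 then 0 else pXZ a c * pYZ b c / pZ c) := by
      refine Finset.sum_le_sum fun a _ => Finset.sum_le_sum fun b _ =>
        Finset.sum_le_sum fun c _ => ?_
      by_cases hq : q a b c = 0
      · rw [if_pos hq]
        split_ifs with h
        · exact le_refl 0
        · exact div_nonneg (mul_nonneg (hpXZ0 a c) (hpYZ0 b c)) (hpZ0 c)
      · have hZ' : pZ c ≠ 0 :=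
          ne_of_gt (lt_of_lt_of_le (lt_of_le_of_ne (h0 a b c) (Ne.symm hq)) (hqZ a b c))
        rw [if_neg hq, if_neg hZ']
    have step2 : ∑ a, ∑ b, ∑ c, (if pZ c = 0 then 0 else pXZ a c * pYZ b c / pZ c)
        = ∑ c, (if pZ c = 0 then 0 else pZ c) := by
      have swap1 : ∀ a : α, ∑ b, ∑ c, (if pZ c = 0 then 0 else pXZ a c * pYZ b c / pZ c)
          = ∑ c, ∑ b, (if pZ c = 0 then 0 else pXZ a c * pYZ b c / pZ c) :=
        fun a => Finset.sum_comm
      simp only [swap1]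
      rw [Finset.sum_comm]
      refine Finset.sum_congr rfl fun c _ => ?_
      by_cases hZ' : pZ c = 0
      · simp [hZ']
      · rw [if_neg hZ']
        have hYsum : ∑ b, pYZ b c = pZ c := Finset.sum_comm
        have inner : ∀ a : α, ∑ b, (if pZ c = 0 then 0 else pXZ a c * pYZ b c / pZ c)
            = pXZ a c := by
          intro a
          simp only [if_neg hZ']
          have : ∀ b : β, pXZ a c * pYZ b c / pZ c = pXZ a c / pZ c * pYZ b c := by
            intro b; ring
          rw [Finset.sum_congr rfl fun b _ => this b, ← Finset.mul_sum, hYsum,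
            div_mul_cancel₀ _ hZ']
        rw [Finset.sum_congr rfl fun a _ => inner a]
    have step3 : ∑ c, (if pZ c = 0 then 0 else pZ c) ≤ ∑ c, pZ c := by
      refine Finset.sum_le_sum fun c _ => ?_
      split_ifs with h
      · exact hpZ0 c
      · exact le_refl _
    have step4 : ∑ c, pZ c = 1 := by
      rw [show ∑ c, pZ c = ∑ a, ∑ b, ∑ c, q a b c from ?_, h1]
      rw [Finset.sum_comm]
      exact Finset.sum_congr rfl fun a _ => Finset.sum_comm
    calc _ ≤ _ := step1
      _ = _ := step2
      _ ≤ _ := step3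
      _ = 1 := step4
  have hlhs : ∑ a, ∑ b, ∑ c,
        (q a b c - (if q a b c = 0 then 0 else pXZ a c * pYZ b c / pZ c))
      = 1 - ∑ a, ∑ b, ∑ c, (if q a b c = 0 then 0 else pXZ a c * pYZ b c / pZ c) := by
    simp only [Finset.sum_sub_distrib]
    rw [h1]
  have hrhs : ∑ a, ∑ b, ∑ c,
        (-(q a b c * Real.log (pXZ a c)) + -(q a b c * Real.log (pYZ b c))
          - -(q a b c * Real.log (q a b c)) - -(q a b c * Real.log (pZ c)))
      = (∑ a, ∑ b, ∑ c, -(q a b c * Real.log (pXZ a c)))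
        + (∑ a, ∑ b, ∑ c, -(q a b c * Real.log (pYZ b c)))
        - (∑ a, ∑ b, ∑ c, -(q a b c * Real.log (q a b c)))
        - (∑ a, ∑ b, ∑ c, -(q a b c * Real.log (pZ c))) := by
    simp only [Finset.sum_sub_distrib, Finset.sum_add_distrib]
  rw [hlhs, hrhs] at hsum
  linarith

section Aux
variable {Ω : Type*} [MeasureSpace Ω] [IsProbabilityMeasure (ℙ : Measure Ω)]
variable {α β γ : Type*}
set_option linter.unusedSectionVars false

lemma prob_nonneg (X : Ω → α) (x : α) : 0 ≤ prob X x := ENNReal.toReal_nonneg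

lemma sum_prob [Fintype α] [MeasurableSpace α] [MeasurableSingletonClass α]
    {X : Ω → α} (hX : Measurable X) : ∑ x, prob X x = 1 := by
  unfold prob
  rw [← ENNReal.toReal_sum (fun a _ => measure_ne_top _ _)]
  rw [MeasureTheory.sum_measure_preimage_singleton _
    (fun y _ => hX (measurableSet_singleton y))]
  simp

lemma prob_eq_sum_pair [Fintype β] [MeasurableSpace α] [MeasurableSingletonClass α]
    [MeasurableSpace β] [MeasurableSingletonClass β]
    {f : Ω → α} {g : Ω → β} (hf : Measurable f) (hg : Measurable g) (a : α) :
    prob f a = ∑ b, prob (fun ω => (f ω, g ω)) (a, b) := by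
  unfold prob
  rw [← ENNReal.toReal_sum (fun b _ => measure_ne_top _ _)]
  congr 1
  have h := MeasureTheory.sum_measure_preimage_singleton
    (μ := (ℙ : Measure Ω)) ({a} ×ˢ (Finset.univ : Finset β))
    (f := fun ω => (f ω, g ω))
    (fun y _ => (hf.prodMk hg) (measurableSet_singleton y))
  rw [Finset.sum_product, Finset.sum_singleton] at h
  rw [h]
  congr 1
  ext ω
  simp [Prod.ext_iff, eq_comm]

lemma prob_comp_inj {α' : Type*} {j : α → α'} (hj : Function.Injective j)
    (W : Ω → α) (u : α) : prob (fun ω => j (W ω)) (j u) = prob W u := by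
  unfold prob
  congr 2
  ext ω
  simp [hj.eq_iff]

lemma prob_comp_not_range {α' : Type*} {j : α → α'} (W : Ω → α) {v : α'}
    (hv : v ∉ Set.range j) : prob (fun ω => j (W ω)) v = 0 := by
  have : (fun ω => j (W ω)) ⁻¹' {v} = ∅ := by
    ext ω
    simp only [Set.mem_preimage, Set.mem_singleton_iff, Set.mem_empty_iff_false, iff_false]
    exact fun h => hv ⟨W ω, h⟩
  unfold prob
  rw [this, measure_empty, ENNReal.toReal_zero]

lemma entropy_comp_inj [Fintype α] {α' : Type*} [Fintype α'] {j : α → α'}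
    (hj : Function.Injective j) (W : Ω → α) :
    entropy (fun ω => j (W ω)) = entropy W := by
  classical
  unfold entropy
  congr 1
  have h1 : ∑ v : α', prob (fun ω => j (W ω)) v * Real.log (prob (fun ω => j (W ω)) v)
      = ∑ v ∈ Finset.univ.image j,
          prob (fun ω => j (W ω)) v * Real.log (prob (fun ω => j (W ω)) v) :=
    (Finset.sum_subset (Finset.subset_univ _) (fun v _ hv => by
      rw [prob_comp_not_range W (fun ⟨x, hx⟩ =>
        hv (Finset.mem_image.mpr ⟨x, Finset.mem_univ x, hx⟩))]; simp)).symm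
  rw [h1, Finset.sum_image (fun x _ y _ h => hj h)]
  exact Finset.sum_congr rfl (fun x _ => by rw [prob_comp_inj hj])

lemma cmi_nonneg {𝒳 𝒴 𝒵 : Type*} [Fintype 𝒳] [Fintype 𝒴] [Fintype 𝒵]
    [MeasurableSpace 𝒳] [MeasurableSingletonClass 𝒳]
    [MeasurableSpace 𝒴] [MeasurableSingletonClass 𝒴]
    [MeasurableSpace 𝒵] [MeasurableSingletonClass 𝒵]
    {X : Ω → 𝒳} {Y : Ω → 𝒴} {Z : Ω → 𝒵}
    (hX : Measurable X) (hY : Measurable Y) (hZ : Measurable Z) :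
    0 ≤ condMutualInfo X Y Z := by
  classical
  set q : 𝒳 → 𝒴 → 𝒵 → ℝ := fun a b c => prob (fun ω => (X ω, Y ω, Z ω)) (a, b, c) with hq
  have h0 : ∀ a b c, 0 ≤ q a b c := fun a b c => prob_nonneg _ _
  have h1 : ∑ a, ∑ b, ∑ c, q a b c = 1 := by
    have := sum_prob (X := fun ω => (X ω, Y ω, Z ω)) (hX.prodMk (hY.prodMk hZ))
    simp only [Fintype.sum_prod_type, hq] at this ⊢
    exact this
  have jXZ : Function.Injective (fun p : 𝒳 × 𝒴 × 𝒵 => ((p.1, p.2.2), p.2.1)) := by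
    intro ⟨a, b, c⟩ ⟨a', b', c'⟩ h; simp_all [Prod.ext_iff]
  have jYZ : Function.Injective (fun p : 𝒳 × 𝒴 × 𝒵 => ((p.2.1, p.2.2), p.1)) := by
    intro ⟨a, b, c⟩ ⟨a', b', c'⟩ h; simp_all [Prod.ext_iff]
  have jZ : Function.Injective (fun p : 𝒳 × 𝒴 × 𝒵 => (p.2.2, (p.1, p.2.1))) := by
    intro ⟨a, b, c⟩ ⟨a', b', c'⟩ h; simp_all [Prod.ext_iff]
  have mXZ : ∀ a c, prob (fun ω => (X ω, Z ω)) (a, c) = ∑ b, q a b c := by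
    intro a c
    rw [prob_eq_sum_pair (hX.prodMk hZ) hY]
    refine Finset.sum_congr rfl fun b _ => ?_
    rw [hq]
    simpa using prob_comp_inj jXZ (fun ω => (X ω, Y ω, Z ω)) (a, b, c)
  have mYZ : ∀ b c, prob (fun ω => (Y ω, Z ω)) (b, c) = ∑ a, q a b c := by
    intro b c
    rw [prob_eq_sum_pair (hY.prodMk hZ) hX]
    refine Finset.sum_congr rfl fun a _ => ?_
    rw [hq]
    simpa using prob_comp_inj jYZ (fun ω => (X ω, Y ω, Z ω)) (a, b, c)
  have mZ : ∀ c, prob Z c = ∑ a, ∑ b, q a b c := by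
    intro c
    rw [prob_eq_sum_pair hZ (hX.prodMk hY), Fintype.sum_prod_type]
    refine Finset.sum_congr rfl fun a _ => Finset.sum_congr rfl fun b _ => ?_
    rw [hq]
    simpa using prob_comp_inj jZ (fun ω => (X ω, Y ω, Z ω)) (a, b, c)
  unfold condMutualInfo entropy
  have H1 : -∑ p : 𝒳 × 𝒵, prob (fun ω => (X ω, Z ω)) p
        * Real.log (prob (fun ω => (X ω, Z ω)) p)
      = ∑ a, ∑ c, -((∑ b, q a b c) * Real.log (∑ b, q a b c)) := by
    rw [← Finset.sum_neg_distrib, Fintype.sum_prod_type]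
    exact Finset.sum_congr rfl fun a _ => Finset.sum_congr rfl fun c _ => by rw [mXZ]
  have H2 : -∑ p : 𝒴 × 𝒵, prob (fun ω => (Y ω, Z ω)) p
        * Real.log (prob (fun ω => (Y ω, Z ω)) p)
      = ∑ b, ∑ c, -((∑ a, q a b c) * Real.log (∑ a, q a b c)) := by
    rw [← Finset.sum_neg_distrib, Fintype.sum_prod_type]
    exact Finset.sum_congr rfl fun b _ => Finset.sum_congr rfl fun c _ => by rw [mYZ]
  have H3 : -∑ p : 𝒳 × 𝒴 × 𝒵, prob (fun ω => (X ω, Y ω, Z ω)) p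
        * Real.log (prob (fun ω => (X ω, Y ω, Z ω)) p)
      = ∑ a, ∑ b, ∑ c, -(q a b c * Real.log (q a b c)) := by
    rw [← Finset.sum_neg_distrib, Fintype.sum_prod_type]
    simp only [Fintype.sum_prod_type, hq]
  have H4 : -∑ c, prob Z c * Real.log (prob Z c)
      = ∑ c, -((∑ a, ∑ b, q a b c) * Real.log (∑ a, ∑ b, q a b c)) := by
    rw [← Finset.sum_neg_distrib]
    exact Finset.sum_congr rfl fun c _ => by rw [mZ]
  rw [H1, H2, H3, H4]
  exact key_ineq q h0 h1

lemma cmi_symm {𝒳 𝒴 𝒵 : Type*} [Fintype 𝒳] [Fintype 𝒴] [Fintype 𝒵]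
    (X : Ω → 𝒳) (Y : Ω → 𝒴) (Z : Ω → 𝒵) :
    condMutualInfo X Y Z = condMutualInfo Y X Z := by
  have hj : Function.Injective (fun p : 𝒳 × 𝒴 × 𝒵 => (p.2.1, p.1, p.2.2)) := by
    intro ⟨a, b, c⟩ ⟨a', b', c'⟩ h; simp_all [Prod.ext_iff]
  have e1 : entropy (fun ω => (Y ω, X ω, Z ω)) = entropy (fun ω => (X ω, Y ω, Z ω)) := by
    simpa using entropy_comp_inj hj (fun ω => (X ω, Y ω, Z ω))
  simp only [condMutualInfo]
  linarith [e1]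

lemma cmi_chain {𝒳 𝒴 𝒲 𝒵 : Type*} [Fintype 𝒳] [Fintype 𝒴] [Fintype 𝒲] [Fintype 𝒵]
    (X : Ω → 𝒳) (Y : Ω → 𝒴) (W : Ω → 𝒲) (Z : Ω → 𝒵) :
    condMutualInfo X (fun ω => (Y ω, W ω)) Z
      = condMutualInfo X W Z + condMutualInfo X Y (fun ω => (W ω, Z ω)) := by
  have hj1 : Function.Injective (fun p : 𝒴 × 𝒲 × 𝒵 => ((p.1, p.2.1), p.2.2)) := by
    intro ⟨a, b, c⟩ ⟨a', b', c'⟩ h; simp_all [Prod.ext_iff]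
  have e1 : entropy (fun ω => ((Y ω, W ω), Z ω)) = entropy (fun ω => (Y ω, W ω, Z ω)) := by
    simpa using entropy_comp_inj hj1 (fun ω => (Y ω, W ω, Z ω))
  have hj2 : Function.Injective
      (fun p : 𝒳 × 𝒴 × 𝒲 × 𝒵 => (p.1, (p.2.1, p.2.2.1), p.2.2.2)) := by
    intro ⟨a, b, c, d⟩ ⟨a', b', c', d'⟩ h; simp_all [Prod.ext_iff]
  have e2 : entropy (fun ω => (X ω, (Y ω, W ω), Z ω))
      = entropy (fun ω => (X ω, Y ω, W ω, Z ω)) := by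
    simpa using entropy_comp_inj hj2 (fun ω => (X ω, Y ω, W ω, Z ω))
  simp only [condMutualInfo]
  linarith [e1, e2]

lemma cmi_snd_recode {𝒳 𝒴 𝒴' 𝒵 : Type*} [Fintype 𝒳] [Fintype 𝒴] [Fintype 𝒴'] [Fintype 𝒵]
    {j : 𝒴 → 𝒴'} (hj : Function.Injective j)
    (X : Ω → 𝒳) (Y : Ω → 𝒴) (Z : Ω → 𝒵) :
    condMutualInfo X (fun ω => j (Y ω)) Z = condMutualInfo X Y Z := by
  have hj1 : Function.Injective (fun p : 𝒴 × 𝒵 => (j p.1, p.2)) := by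
    intro ⟨a, b⟩ ⟨a', b'⟩ h; simp_all [Prod.ext_iff]; exact hj h.1
  have e1 : entropy (fun ω => (j (Y ω), Z ω)) = entropy (fun ω => (Y ω, Z ω)) := by
    simpa using entropy_comp_inj hj1 (fun ω => (Y ω, Z ω))
  have hj2 : Function.Injective (fun p : 𝒳 × 𝒴 × 𝒵 => (p.1, j p.2.1, p.2.2)) := by
    intro ⟨a, b, c⟩ ⟨a', b', c'⟩ h; simp_all [Prod.ext_iff]; exact hj h.2.1
  have e2 : entropy (fun ω => (X ω, j (Y ω), Z ω))
      = entropy (fun ω => (X ω, Y ω, Z ω)) := by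
    simpa using entropy_comp_inj hj2 (fun ω => (X ω, Y ω, Z ω))
  simp only [condMutualInfo]
  linarith [e1, e2]

lemma cmi_cond_recode {𝒳 𝒴 𝒵 𝒵' : Type*} [Fintype 𝒳] [Fintype 𝒴] [Fintype 𝒵] [Fintype 𝒵']
    {j : 𝒵 → 𝒵'} (hj : Function.Injective j)
    (X : Ω → 𝒳) (Y : Ω → 𝒴) (Z : Ω → 𝒵) :
    condMutualInfo X Y (fun ω => j (Z ω)) = condMutualInfo X Y Z := by
  have hjx : Function.Injective (fun p : 𝒳 × 𝒵 => (p.1, j p.2)) := by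
    intro ⟨a, b⟩ ⟨a', b'⟩ h; simp_all [Prod.ext_iff]; exact hj h.2
  have e1 : entropy (fun ω => (X ω, j (Z ω))) = entropy (fun ω => (X ω, Z ω)) := by
    simpa using entropy_comp_inj hjx (fun ω => (X ω, Z ω))
  have hjy : Function.Injective (fun p : 𝒴 × 𝒵 => (p.1, j p.2)) := by
    intro ⟨a, b⟩ ⟨a', b'⟩ h; simp_all [Prod.ext_iff]; exact hj h.2
  have e2 : entropy (fun ω => (Y ω, j (Z ω))) = entropy (fun ω => (Y ω, Z ω)) := by
    simpa using entropy_comp_inj hjy (fun ω => (Y ω, Z ω))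
  have hjxy : Function.Injective (fun p : 𝒳 × 𝒴 × 𝒵 => (p.1, p.2.1, j p.2.2)) := by
    intro ⟨a, b, c⟩ ⟨a', b', c'⟩ h; simp_all [Prod.ext_iff]; exact hj h.2.2
  have e3 : entropy (fun ω => (X ω, Y ω, j (Z ω)))
      = entropy (fun ω => (X ω, Y ω, Z ω)) := by
    simpa using entropy_comp_inj hjxy (fun ω => (X ω, Y ω, Z ω))
  have e4 : entropy (fun ω => j (Z ω)) = entropy Z := entropy_comp_inj hj Z
  simp only [condMutualInfo]
  linarith [e1, e2, e3, e4]

lemma entropy_const {ι : Type*} [Fintype ι] (z : ι) :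
    entropy (fun _ : Ω => z) = 0 := by
  classical
  have hp : ∀ x : ι, prob (fun _ : Ω => z) x * Real.log (prob (fun _ : Ω => z) x) = 0 := by
    intro x
    by_cases h : x = z
    · subst h
      have hpre : (fun _ : Ω => x) ⁻¹' {x} = Set.univ := by ext ω; simp
      unfold prob
      rw [hpre, measure_univ]
      simp
    · have hpre : (fun _ : Ω => z) ⁻¹' {x} = ∅ := by
        ext ω; simp [Ne.symm h]
      unfold prob
      rw [hpre]
      simp
  unfold entropy
  rw [Finset.sum_congr rfl fun x _ => hp x]
  simp

lemma cmi_const_fin1 {𝒳 𝒴 : Type*} [Fintype 𝒳] [Fintype 𝒴] (X : Ω → 𝒳) (Y : Ω → 𝒴) :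
    condMutualInfo X Y (fun _ : Ω => (0 : Fin 1)) = mutualInfo X Y := by
  have hjx : Function.Injective (fun x : 𝒳 => (x, (0 : Fin 1))) := by
    intro a b h; simpa [Prod.ext_iff] using h
  have e1 : entropy (fun ω => (X ω, (0 : Fin 1))) = entropy X :=
    entropy_comp_inj hjx X
  have hjy : Function.Injective (fun y : 𝒴 => (y, (0 : Fin 1))) := by
    intro a b h; simpa [Prod.ext_iff] using h
  have e2 : entropy (fun ω => (Y ω, (0 : Fin 1))) = entropy Y :=
    entropy_comp_inj hjy Y
  have hjxy : Function.Injective (fun p : 𝒳 × 𝒴 => (p.1, p.2, (0 : Fin 1))) := by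
    intro ⟨a, b⟩ ⟨a', b'⟩ h; simp_all [Prod.ext_iff]
  have e3 : entropy (fun ω => (X ω, Y ω, (0 : Fin 1)))
      = entropy (fun ω => (X ω, Y ω)) := by
    simpa using entropy_comp_inj hjxy (fun ω => (X ω, Y ω))
  have e4 : entropy (fun _ : Ω => (0 : Fin 1)) = 0 := entropy_const _
  simp only [condMutualInfo, mutualInfo]
  linarith [e1, e2, e3, e4]

lemma cmi_swap_snd {𝒳 𝒜 ℬ 𝒵 : Type*} [Fintype 𝒳] [Fintype 𝒜] [Fintype ℬ] [Fintype 𝒵]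
    (X : Ω → 𝒳) (A : Ω → 𝒜) (B : Ω → ℬ) (Z : Ω → 𝒵) :
    condMutualInfo X (fun ω => (A ω, B ω)) Z
      = condMutualInfo X (fun ω => (B ω, A ω)) Z := by
  have := cmi_snd_recode (j := Prod.swap) Prod.swap_injective X
    (fun ω => (A ω, B ω)) Z
  simpa using this.symm

lemma cmi_swap_cond {𝒳 𝒴 𝒜 ℬ : Type*} [Fintype 𝒳] [Fintype 𝒴] [Fintype 𝒜] [Fintype ℬ]
    (X : Ω → 𝒳) (Y : Ω → 𝒴) (A : Ω → 𝒜) (B : Ω → ℬ) :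
    condMutualInfo X Y (fun ω => (A ω, B ω))
      = condMutualInfo X Y (fun ω => (B ω, A ω)) := by
  have := cmi_cond_recode (j := Prod.swap) Prod.swap_injective X Y
    (fun ω => (A ω, B ω))
  simpa using this.symm

/-- If `D = g ∘ U` is a deterministic function of `U`, then
`I[V ; D | (U,Z)] = 0`. -/
lemma cmi_fun_cond_zero {𝒱 𝒜 𝒜' 𝒵 : Type*} [Fintype 𝒱] [Fintype 𝒜] [Fintype 𝒜'] [Fintype 𝒵]
    (V : Ω → 𝒱) (U : Ω → 𝒜) (g : 𝒜 → 𝒜') (Z : Ω → 𝒵) :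
    condMutualInfo V (fun ω => g (U ω)) (fun ω => (U ω, Z ω)) = 0 := by
  have hj1 : Function.Injective (fun p : 𝒜 × 𝒵 => (g p.1, p.1, p.2)) := by
    intro ⟨a, b⟩ ⟨a', b'⟩ h; simp_all [Prod.ext_iff]
  have e1 : entropy (fun ω => (g (U ω), U ω, Z ω)) = entropy (fun ω => (U ω, Z ω)) := by
    simpa using entropy_comp_inj hj1 (fun ω => (U ω, Z ω))
  have hj2 : Function.Injective (fun p : 𝒱 × 𝒜 × 𝒵 => (p.1, g p.2.1, p.2.1, p.2.2)) := by
    intro ⟨a, b, c⟩ ⟨a', b', c'⟩ h; simp_all [Prod.ext_iff]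
  have e2 : entropy (fun ω => (V ω, g (U ω), U ω, Z ω))
      = entropy (fun ω => (V ω, U ω, Z ω)) := by
    simpa using entropy_comp_inj hj2 (fun ω => (V ω, U ω, Z ω))
  simp only [condMutualInfo]
  linarith [e1, e2]

/-- Data processing: `I[V ; g(U) | Z] ≤ I[V ; U | Z]`. -/
lemma cmi_data_proc {𝒱 𝒜 𝒜' 𝒵 : Type*} [Fintype 𝒱] [Fintype 𝒜] [Fintype 𝒜'] [Fintype 𝒵]
    [MeasurableSpace 𝒱] [MeasurableSingletonClass 𝒱]
    [MeasurableSpace 𝒜] [MeasurableSingletonClass 𝒜]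
    [MeasurableSpace 𝒜'] [MeasurableSingletonClass 𝒜']
    [MeasurableSpace 𝒵] [MeasurableSingletonClass 𝒵]
    {V : Ω → 𝒱} {U : Ω → 𝒜} {g : 𝒜 → 𝒜'} {Z : Ω → 𝒵}
    (hV : Measurable V) (hU : Measurable U) (hg : Measurable g) (hZ : Measurable Z) :
    condMutualInfo V (fun ω => g (U ω)) Z ≤ condMutualInfo V U Z := by
  have c1 := cmi_chain V (fun ω => g (U ω)) U Z
  have c2 : condMutualInfo V (fun ω => g (U ω)) (fun ω => (U ω, Z ω)) = 0 :=
    cmi_fun_cond_zero V U g Z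
  have c3 := cmi_swap_snd V (fun ω => g (U ω)) U Z
  have c4 := cmi_chain V U (fun ω => g (U ω)) Z
  have n : 0 ≤ condMutualInfo V U (fun ω => (g (U ω), Z ω)) :=
    cmi_nonneg hV hU ((hg.comp hU).prodMk hZ)
  linarith [c1, c2, c3, c4, n]

/-- Compression bound:
`I[U;V|Z] ≤ I[V;Vc|Z] + I[Vc;U|(V,Z)] + I[U;V|(Vc,Z)]`. -/
lemma cmi_comp_bound {𝒰 𝒱 𝒞 𝒵 : Type*} [Fintype 𝒰] [Fintype 𝒱] [Fintype 𝒞] [Fintype 𝒵]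
    [MeasurableSpace 𝒰] [MeasurableSingletonClass 𝒰]
    [MeasurableSpace 𝒱] [MeasurableSingletonClass 𝒱]
    [MeasurableSpace 𝒞] [MeasurableSingletonClass 𝒞]
    [MeasurableSpace 𝒵] [MeasurableSingletonClass 𝒵]
    {U : Ω → 𝒰} {V : Ω → 𝒱} {Vc : Ω → 𝒞} {Z : Ω → 𝒵}
    (hU : Measurable U) (hV : Measurable V) (hVc : Measurable Vc) (hZ : Measurable Z) :
    condMutualInfo U V Z ≤ condMutualInfo V Vc Z
      + condMutualInfo Vc U (fun ω => (V ω, Z ω))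
      + condMutualInfo U V (fun ω => (Vc ω, Z ω)) := by
  have h1 := cmi_chain U Vc V Z
  have h2 := cmi_swap_snd U Vc V Z
  have h3 := cmi_chain U V Vc Z
  have h4 := cmi_symm U Vc Z
  have h5 := cmi_chain Vc U V Z
  have h6 := cmi_swap_snd Vc U V Z
  have h7 := cmi_chain Vc V U Z
  have h8 := cmi_symm V Vc Z
  have n1 : 0 ≤ condMutualInfo U Vc (fun ω => (V ω, Z ω)) :=
    cmi_nonneg hU hVc (hV.prodMk hZ)
  have n2 : 0 ≤ condMutualInfo Vc V (fun ω => (U ω, Z ω)) :=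
    cmi_nonneg hVc hV (hU.prodMk hZ)
  linarith [h1, h2, h3, h4, h5, h6, h7, h8, n1, n2]

end Aux

/-- **Rate-distortion estimation error bound for meta-learning, upper bound**
(paper, Theorem 4, upper bound, with the infima over compressions unfolded into a
universally quantified statement).  Under the meta-learning data generating assumptions,
for every compression `ψ̃` of the meta-parameter with `I[H_{M,T} ; ψ̃ | ψ] = 0` and
`I[H_{M,T} ; ψ | ψ̃] ≤ ε M T`, and every compression `θ̃` of the document parameter with
`I[(H_{M,T}, ψ) ; θ̃ | θ_m] = 0` and `I[D_m ; θ_m | (θ̃, ψ)] ≤ ε' T`, the total estimation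
error satisfies
`I[H_{M,T} ; ψ]/(MT) + I[D_m ; θ_m | ψ]/T ≤ I[ψ ; ψ̃]/(MT) + ε + I[θ_m ; θ̃ | ψ]/T + ε'`. -/
theorem meta_rate_distortion_upper_bound
    {Ω : Type*} [MeasureSpace Ω] [IsProbabilityMeasure (ℙ : Measure Ω)]
    {𝒳 Θ Ψ Ψ' Θ' : Type*} [Fintype 𝒳] [Nonempty 𝒳] [Fintype Θ] [Nonempty Θ]
    [Fintype Ψ] [Nonempty Ψ] [Fintype Ψ'] [Nonempty Ψ'] [Fintype Θ'] [Nonempty Θ']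
    [MeasurableSpace 𝒳] [MeasurableSingletonClass 𝒳]
    [MeasurableSpace Θ] [MeasurableSingletonClass Θ]
    [MeasurableSpace Ψ] [MeasurableSingletonClass Ψ]
    [MeasurableSpace Ψ'] [MeasurableSingletonClass Ψ']
    [MeasurableSpace Θ'] [MeasurableSingletonClass Θ']
    (M T : ℕ) (hM : 1 ≤ M) (hT : 1 ≤ T)
    (ψ : Ω → Ψ) (θ : Fin M → Ω → Θ) (X : Fin M → Fin T → Ω → 𝒳)
    (hψ : Measurable ψ) (hθ : ∀ m, Measurable (θ m)) (hX : ∀ m t, Measurable (X m t))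
    -- (i) conditioned on ψ, the pairs (θ_m, D_m) are i.i.d.
    (hiid : ∃ κ : Ψ → Θ × (Fin T → 𝒳) → ℝ,
      (∀ s u, 0 ≤ κ s u) ∧ (∀ s, ∑ u, κ s u = 1) ∧
      ∀ (s : Ψ) (v : Fin M → Θ × (Fin T → 𝒳)),
        prob (fun ω => (ψ ω, fun m => (θ m ω, fun t => X m t ω))) (s, v)
          = prob ψ s * ∏ m, κ s (v m))
    -- (ii) the meta-parameter carries no extra information about D_m beyond θ_m
    (hCI : ∀ m : Fin M, condMutualInfo (fun ω (t : Fin T) => X m t ω) ψ (θ m) = 0)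
    (m : Fin M)
    (ε ε' : ℝ) (hε : 0 ≤ ε) (hε' : 0 ≤ ε')
    (ψ' : Ω → Ψ') (hψ' : Measurable ψ')
    (θ' : Ω → Θ') (hθ' : Measurable θ')
    (hψ'CI : condMutualInfo (fun ω (m' : Fin M) (t : Fin T) => X m' t ω) ψ' ψ = 0)
    (hψ'dist : condMutualInfo (fun ω (m' : Fin M) (t : Fin T) => X m' t ω) ψ ψ'
      ≤ ε * (M * T))
    (hθ'CI : condMutualInfo
      (fun ω => ((fun (m' : Fin M) (t : Fin T) => X m' t ω), ψ ω)) θ' (θ m) = 0)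
    (hθ'dist : condMutualInfo (fun ω (t : Fin T) => X m t ω) (θ m)
      (fun ω => (θ' ω, ψ ω)) ≤ ε' * T) :
    mutualInfo (fun ω (m' : Fin M) (t : Fin T) => X m' t ω) ψ / ((M : ℝ) * T)
        + condMutualInfo (fun ω (t : Fin T) => X m t ω) (θ m) ψ / T
      ≤ mutualInfo ψ ψ' / ((M : ℝ) * T) + ε + condMutualInfo (θ m) θ' ψ / T + ε' := by
  have hMpos : (0 : ℝ) < (M : ℝ) := by exact_mod_cast Nat.lt_of_lt_of_le Nat.zero_lt_one hM
  have hTpos : (0 : ℝ) < (T : ℝ) := by exact_mod_cast Nat.lt_of_lt_of_le Nat.zero_lt_one hT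
  have hMT : (0 : ℝ) < (M : ℝ) * T := mul_pos hMpos hTpos
  have hH : Measurable (fun ω (m' : Fin M) (t : Fin T) => X m' t ω) :=
    measurable_pi_lambda _ fun m' => measurable_pi_lambda _ fun t => hX m' t
  have hD : Measurable (fun ω (t : Fin T) => X m t ω) :=
    measurable_pi_lambda _ fun t => hX m t
  -- Step A : I[H;ψ] ≤ I[ψ;ψ'] + ε M T
  have stepA : mutualInfo (fun ω (m' : Fin M) (t : Fin T) => X m' t ω) ψ
      ≤ mutualInfo ψ ψ' + ε * ((M : ℝ) * T) := by
    have hcomp := cmi_comp_bound (U := fun ω (m' : Fin M) (t : Fin T) => X m' t ω)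
      (V := ψ) (Vc := ψ') (Z := fun _ : Ω => (0 : Fin 1)) hH hψ hψ' measurable_const
    have c1 : condMutualInfo (fun ω (m' : Fin M) (t : Fin T) => X m' t ω) ψ
        (fun _ : Ω => (0 : Fin 1))
        = mutualInfo (fun ω (m' : Fin M) (t : Fin T) => X m' t ω) ψ :=
      cmi_const_fin1 _ _
    have c2 : condMutualInfo ψ ψ' (fun _ : Ω => (0 : Fin 1)) = mutualInfo ψ ψ' :=
      cmi_const_fin1 _ _
    have hjc : Function.Injective (fun s : Ψ => (s, (0 : Fin 1))) := by
      intro a b h; simpa [Prod.ext_iff] using h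
    have c3 : condMutualInfo ψ' (fun ω (m' : Fin M) (t : Fin T) => X m' t ω)
        (fun ω => (ψ ω, (0 : Fin 1)))
        = condMutualInfo ψ' (fun ω (m' : Fin M) (t : Fin T) => X m' t ω) ψ := by
      simpa using cmi_cond_recode hjc ψ' (fun ω (m' : Fin M) (t : Fin T) => X m' t ω) ψ
    have c3' := cmi_symm ψ' (fun ω (m' : Fin M) (t : Fin T) => X m' t ω) ψ
    have hjc' : Function.Injective (fun s : Ψ' => (s, (0 : Fin 1))) := by
      intro a b h; simpa [Prod.ext_iff] using h
    have c4 : condMutualInfo (fun ω (m' : Fin M) (t : Fin T) => X m' t ω) ψ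
        (fun ω => (ψ' ω, (0 : Fin 1)))
        = condMutualInfo (fun ω (m' : Fin M) (t : Fin T) => X m' t ω) ψ ψ' := by
      simpa using cmi_cond_recode hjc' (fun ω (m' : Fin M) (t : Fin T) => X m' t ω) ψ ψ'
    have hcast : ε * ((M : ℕ) * (T : ℕ) : ℝ) = ε * ((M : ℝ) * T) := by push_cast; ring
    linarith [hcomp, c1, c2, c3, c3', c4, hψ'CI, hψ'dist, hcast.symm.le]
  -- Step B : I[D;θ_m|ψ] ≤ I[θ_m;θ'|ψ] + ε' T
  have stepB : condMutualInfo (fun ω (t : Fin T) => X m t ω) (θ m) ψ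
      ≤ condMutualInfo (θ m) θ' ψ + ε' * (T : ℝ) := by
    have hcomp := cmi_comp_bound (U := fun ω (t : Fin T) => X m t ω)
      (V := θ m) (Vc := θ') (Z := ψ) hD (hθ m) hθ' hψ
    have hmid : condMutualInfo θ' (fun ω (t : Fin T) => X m t ω)
        (fun ω => (θ m ω, ψ ω)) ≤ 0 := by
      have hdp : condMutualInfo θ' (fun ω (t : Fin T) => X m t ω)
          (fun ω => (θ m ω, ψ ω))
          ≤ condMutualInfo θ' (fun ω (m' : Fin M) (t : Fin T) => X m' t ω)
            (fun ω => (θ m ω, ψ ω)) := by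
        have := cmi_data_proc (V := θ')
          (U := fun ω (m' : Fin M) (t : Fin T) => X m' t ω)
          (g := fun v => v m) (Z := fun ω => (θ m ω, ψ ω))
          hθ' hH (measurable_pi_apply m) ((hθ m).prodMk hψ)
        simpa using this
      have hswap := cmi_swap_cond θ' (fun ω (m' : Fin M) (t : Fin T) => X m' t ω)
        (θ m) ψ
      have hchain := cmi_chain θ' (fun ω (m' : Fin M) (t : Fin T) => X m' t ω) ψ (θ m)
      have hsymm := cmi_symm
        (fun ω => ((fun (m' : Fin M) (t : Fin T) => X m' t ω), ψ ω)) θ' (θ m)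
      have n1 : 0 ≤ condMutualInfo θ' ψ (θ m) := cmi_nonneg hθ' hψ (hθ m)
      linarith [hdp, hswap, hchain, hsymm, n1, hθ'CI]
    have hcast : ε' * ((T : ℕ) : ℝ) = ε' * (T : ℝ) := by push_cast; ring
    linarith [hcomp, hθ'dist, hmid, hcast.symm.le]
  -- combine
  have a1 : mutualInfo (fun ω (m' : Fin M) (t : Fin T) => X m' t ω) ψ / ((M : ℝ) * T)
      ≤ mutualInfo ψ ψ' / ((M : ℝ) * T) + ε := by
    rw [show mutualInfo ψ ψ' / ((M : ℝ) * T) + ε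
        = (mutualInfo ψ ψ' + ε * ((M : ℝ) * T)) / ((M : ℝ) * T) by
      field_simp]
    exact (div_le_div_iff_of_pos_right hMT).mpr stepA
  have b1 : condMutualInfo (fun ω (t : Fin T) => X m t ω) (θ m) ψ / (T : ℝ)
      ≤ condMutualInfo (θ m) θ' ψ / (T : ℝ) + ε' := by
    rw [show condMutualInfo (θ m) θ' ψ / (T : ℝ) + ε'
        = (condMutualInfo (θ m) θ' ψ + ε' * (T : ℝ)) / (T : ℝ) by
      field_simp]
    exact (div_le_div_iff_of_pos_right hTpos).mpr stepB
  linarith [a1, b1]
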